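/- Second Dual Distance Bound: for any recovery G-system R and any (λ_1,…,λ_k) ∈ Λ(R, 1), setting ℓ_i := min{λ_i, 1}, one has ∑_{i=1}^k ( (δ_i^2 − 1)(λ_i − ω_i ℓ_i) + (δ_i^1 − 1) ω_i ℓ_i ) ≤ n. -/

import Mathlib

open Finset

/-- `R` is a recovery set for object `i`: the standard basis vector `e i` lies in the
span of the columns of `G` indexed by `R`. -/
def recSet {F : Type} [Field F] {k n : ℕ} (G : Matrix (Fin k) (Fin n) F)
    (i : Fin k) (R : Finset (Fin n)) : Prop :=
  (Pi.single i 1 : Fin k → F) ∈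
    Submodule.span F ((fun j => fun r => G r j) '' (R : Set (Fin n)))

/-- A recovery `G`-system: each `Rs i` is a nonempty collection of recovery sets for object `i`. -/
def recSystem {F : Type} [Field F] {k n : ℕ} (G : Matrix (Fin k) (Fin n) F)
    (Rs : Fin k → Finset (Finset (Fin n))) : Prop :=
  ∀ i, (Rs i).Nonempty ∧ ∀ R ∈ Rs i, recSet G i R

/-- Membership of a rate vector `lam` in the service rate region `Λ(Rs, μ)`:
there is a feasible allocation. -/
def inRegion {k n : ℕ} (Rs : Fin k → Finset (Finset (Fin n))) (μ : ℝ)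
    (lam : Fin k → ℝ) : Prop :=
  ∃ a : Fin k → Finset (Fin n) → ℝ,
    (∀ i R, 0 ≤ a i R) ∧
    (∀ i, ∑ R ∈ Rs i, a i R = lam i) ∧
    (∀ j : Fin n, ∑ i, ∑ R ∈ Rs i, (if j ∈ R then a i R else 0) ≤ μ)

/-- The `r`-th row of the matrix `G_i = (G | e_iᵀ)`, i.e. `G` with the `i`-th standard
basis vector appended as column `n+1`. -/
def GiRow {F : Type} [Field F] {k n : ℕ} (G : Matrix (Fin k) (Fin n) F) (i : Fin k)
    (r : Fin k) : Fin (n + 1) → F :=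
  Fin.snoc (fun j => G r j) (if r = i then 1 else 0)

/-- The dual `C_i^⊥` of the code `C_i` generated by `G_i = (G | e_iᵀ)`. -/
def Ciperp {F : Type} [Field F] {k n : ℕ} (G : Matrix (Fin k) (Fin n) F) (i : Fin k) :
    Set (Fin (n + 1) → F) :=
  {y | ∀ c ∈ Submodule.span F (Set.range (GiRow G i)), ∑ j, y j * c j = 0}

variable {F : Type} [Field F] [DecidableEq F] {k n : ℕ} (G : Matrix (Fin k) (Fin n) F) (i : Fin k)

lemma mem_Ciperp_of_rows {y : Fin (n+1) → F}
    (h : ∀ r, ∑ j, y j * GiRow G i r j = 0) : y ∈ Ciperp G i := by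
  intro c hc
  induction hc using Submodule.span_induction with
  | mem c hcm => obtain ⟨r, rfl⟩ := hcm; exact h r
  | zero => simp
  | add c d _ _ hc hd => simp [mul_add, Finset.sum_add_distrib, hc, hd]
  | smul t c _ hc =>
      have : ∑ j, y j * (t • c) j = t * ∑ j, y j * c j := by
        rw [Finset.mul_sum]; exact Finset.sum_congr rfl fun j _ => by
          simp [mul_left_comm]
      rw [this, hc, mul_zero]

lemma smul_mem_Ciperp {y : Fin (n+1) → F} (hy : y ∈ Ciperp G i) (t : F) :
    t • y ∈ Ciperp G i := by
  intro c hc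
  have : ∑ j, (t • y) j * c j = t * ∑ j, y j * c j := by
    rw [Finset.mul_sum]; exact Finset.sum_congr rfl fun j _ => by simp [mul_assoc]
  rw [this, hy c hc, mul_zero]

lemma hammingNorm_congr {x y : Fin (n+1) → F} (h : ∀ j, x j ≠ 0 ↔ y j ≠ 0) :
    hammingNorm x = hammingNorm y := by
  unfold hammingNorm
  exact congrArg Finset.card (Finset.filter_congr fun j _ => by simpa using h j)

lemma hammingNorm_snoc (c : Fin n → F) (a : F) (ha : a ≠ 0) :
    hammingNorm (Fin.snoc c a : Fin (n+1) → F) = hammingNorm c + 1 := by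
  unfold hammingNorm
  rw [Finset.card_filter, Finset.card_filter, Fin.sum_univ_castSucc]
  simp [ha]

lemma codeword_of_recSet {R : Finset (Fin n)} (h : recSet G i R) :
    ∃ c : Fin n → F, (∀ j, c j ≠ 0 → j ∈ R) ∧
      (Fin.snoc c (-1 : F) : Fin (n+1) → F) ∈ Ciperp G i := by
  obtain ⟨l, hl, hsum⟩ := (Finsupp.mem_span_image_iff_linearCombination F).mp h
  refine ⟨fun j => l j, fun j hj => hl (Finsupp.mem_support_iff.mpr hj), ?_⟩
  apply mem_Ciperp_of_rows
  intro r
  have hev : ∑ j, l j * G r j = (Pi.single i 1 : Fin k → F) r := by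
    have := congrFun hsum r
    rw [Finsupp.linearCombination_apply] at this
    rw [← this]
    rw [Finsupp.sum_fintype]
    · simp [Finsupp.sum_apply]
    · intro j; simp
  rw [Fin.sum_univ_castSucc]
  simp only [GiRow, Fin.snoc_castSucc, Fin.snoc_last]
  rw [hev, Pi.single_apply]
  by_cases hri : r = i <;> simp [hri]

lemma hammingNorm_smul_ne {x : Fin (n+1) → F} {t : F} (ht : t ≠ 0) :
    hammingNorm (t • x) = hammingNorm x :=
  hammingNorm_congr fun j => by simp [ht]

lemma exists_ne_castSucc {x : Fin (n+1) → F} (hx : x ∈ Ciperp G i)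
    (hlast : x (Fin.last n) ≠ 0) : ∃ j : Fin n, x j.castSucc ≠ 0 := by
  by_contra hno
  push_neg at hno
  have hrow : GiRow G i i ∈ Submodule.span F (Set.range (GiRow G i)) :=
    Submodule.subset_span ⟨i, rfl⟩
  have := hx _ hrow
  rw [Fin.sum_univ_castSucc] at this
  simp only [GiRow, Fin.snoc_castSucc, Fin.snoc_last, if_pos rfl] at this
  simp [hno] at this
  exact hlast this

lemma card_minsupps_le [Fintype F] {d w : ℕ}
    (hω : w * (Fintype.card F - 1) = Nat.card {x : Fin (n + 1) → F //
        x ∈ Ciperp G i ∧ x (Fin.last n) ≠ 0 ∧ hammingNorm x = d})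
    (Ts : Finset (Finset (Fin n)))
    (hTs : ∀ T ∈ Ts, ∃ x : Fin (n+1) → F,
      (x ∈ Ciperp G i ∧ x (Fin.last n) ≠ 0 ∧ hammingNorm x = d) ∧
      ∀ j : Fin n, x j.castSucc ≠ 0 ↔ j ∈ T) :
    Ts.card ≤ w := by
  classical
  set P : (Fin (n+1) → F) → Prop :=
    fun x => x ∈ Ciperp G i ∧ x (Fin.last n) ≠ 0 ∧ hammingNorm x = d with hP
  have hch : ∀ T : ↥Ts, ∃ x : Fin (n+1) → F, P x ∧
      ∀ j : Fin n, x j.castSucc ≠ 0 ↔ j ∈ (T : Finset (Fin n)) :=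
    fun T => hTs T T.2
  let xf : ↥Ts → (Fin (n+1) → F) := fun T => (hch T).choose
  have hxf : ∀ T, P (xf T) ∧ ∀ j : Fin n, (xf T) j.castSucc ≠ 0 ↔ j ∈ (T : Finset (Fin n)) :=
    fun T => (hch T).choose_spec
  let f : ↥Ts × {t : F // t ≠ 0} → {x : Fin (n+1) → F // P x} :=
    fun p => ⟨(p.2 : F) • xf p.1, by
      obtain ⟨⟨h1, h2, h3⟩, _⟩ := hxf p.1
      refine ⟨smul_mem_Ciperp G i h1 _, ?_, ?_⟩
      · simp [p.2.2, h2]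
      · rw [hammingNorm_smul_ne p.2.2]; exact h3⟩
  have hfinj : Function.Injective f := by
    rintro ⟨T1, t1⟩ ⟨T2, t2⟩ hf
    have heq : (t1 : F) • xf T1 = (t2 : F) • xf T2 := congrArg Subtype.val hf
    have hTeq : T1 = T2 := by
      apply Subtype.ext
      apply Finset.ext
      intro j
      rw [← (hxf T1).2 j, ← (hxf T2).2 j]
      have := congrFun heq j.castSucc
      simp only [Pi.smul_apply, smul_eq_mul] at this
      constructor
      · intro hne
        intro h0
        apply mul_ne_zero t1.2 hne
        rw [this, h0, mul_zero]
      · intro hne h0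
        apply mul_ne_zero t2.2 hne
        rw [← this, h0, mul_zero]
    subst hTeq
    have hx12 : xf T1 (Fin.last n) ≠ 0 := (hxf T1).1.2.1
    have := congrFun heq (Fin.last n)
    simp only [Pi.smul_apply, smul_eq_mul] at this
    have ht : (t1 : F) = t2 := mul_right_cancel₀ hx12 this
    exact Prod.ext rfl (Subtype.ext ht)
  have hcard := Fintype.card_le_of_injective f hfinj
  have hcne : Fintype.card {t : F // t ≠ 0} = Fintype.card F - 1 := by
    have : Fintype.card {t : F // ¬ t = 0} = Fintype.card F - Fintype.card {t : F // t = 0} :=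
      Fintype.card_subtype_compl _
    simpa [Fintype.card_subtype_eq] using this
  rw [Fintype.card_prod, Fintype.card_coe, hcne] at hcard
  have hNab : Fintype.card {x : Fin (n+1) → F // P x} = w * (Fintype.card F - 1) := by
    rw [hω]; exact (Nat.card_eq_fintype_card).symm
  rw [hNab] at hcard
  have hqpos : 0 < Fintype.card F - 1 := by
    have := Fintype.one_lt_card (α := F)
    omega
  exact Nat.le_of_mul_le_mul_right hcard hqpos

lemma supp_card {x : Fin (n+1) → F} (hlast : x (Fin.last n) ≠ 0) {T : Finset (Fin n)}
    (hT : ∀ j : Fin n, x j.castSucc ≠ 0 ↔ j ∈ T) : T.card + 1 = hammingNorm x := by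
  have hx : Fin.snoc (Fin.init x) (x (Fin.last n)) = x := Fin.snoc_init_self x
  rw [← hx, hammingNorm_snoc _ _ hlast]
  congr 1
  have hTe : T = Finset.univ.filter (fun j => Fin.init x j ≠ 0) :=
    Finset.ext fun j => by rw [Finset.mem_filter]; simpa [Fin.init] using (hT j).symm
  rw [hTe]
  rfl

theorem second_dual_distance_bound' [Fintype F]
    (hrank : G.rank = k) (hcol : ∀ j : Fin n, ∃ i : Fin k, G i j ≠ 0)
    (δ1 δ2 ω : Fin k → ℕ)
    (hδ1 : ∀ i, (∃ x ∈ Ciperp G i, x (Fin.last n) ≠ 0 ∧ hammingNorm x = δ1 i) ∧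
      ∀ x ∈ Ciperp G i, x (Fin.last n) ≠ 0 → δ1 i ≤ hammingNorm x)
    (hδ2 : ∀ i,
      ((∃ x ∈ Ciperp G i, x (Fin.last n) ≠ 0 ∧ δ1 i < hammingNorm x) →
        ((∃ x ∈ Ciperp G i, x (Fin.last n) ≠ 0 ∧ hammingNorm x = δ2 i ∧
            δ1 i < hammingNorm x) ∧
          ∀ x ∈ Ciperp G i, x (Fin.last n) ≠ 0 → δ1 i < hammingNorm x →
            δ2 i ≤ hammingNorm x)) ∧
      ((¬ ∃ x ∈ Ciperp G i, x (Fin.last n) ≠ 0 ∧ δ1 i < hammingNorm x) → δ2 i = δ1 i))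
    (hω : ∀ i, ω i * (Fintype.card F - 1) =
      Nat.card {x : Fin (n + 1) → F //
        x ∈ Ciperp G i ∧ x (Fin.last n) ≠ 0 ∧ hammingNorm x = δ1 i})
    (Rs : Fin k → Finset (Finset (Fin n)))
    (hRs : ∀ i, (Rs i).Nonempty ∧ ∀ R ∈ Rs i, recSet G i R)
    (lam : Fin k → ℝ)
    (a : Fin k → Finset (Fin n) → ℝ)
    (ha0 : ∀ i R, 0 ≤ a i R)
    (hasum : ∀ i, ∑ R ∈ Rs i, a i R = lam i)
    (hacap : ∀ j : Fin n, ∑ i, ∑ R ∈ Rs i, (if j ∈ R then a i R else 0) ≤ 1) :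
    ∑ i, (((δ2 i : ℝ) - 1) * (lam i - (ω i : ℝ) * min (lam i) 1) +
        ((δ1 i : ℝ) - 1) * ((ω i : ℝ) * min (lam i) 1)) ≤ n := by
  classical
  -- minimal supports
  set Ts : Fin k → Finset (Finset (Fin n)) := fun i =>
    Finset.univ.filter (fun T => ∃ x : Fin (n+1) → F,
      (x ∈ Ciperp G i ∧ x (Fin.last n) ≠ 0 ∧ hammingNorm x = δ1 i) ∧
      ∀ j : Fin n, x j.castSucc ≠ 0 ↔ j ∈ T) with hTsdef
  have hTsmem : ∀ i, ∀ T ∈ Ts i, ∃ x : Fin (n+1) → F,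
      (x ∈ Ciperp G i ∧ x (Fin.last n) ≠ 0 ∧ hammingNorm x = δ1 i) ∧
      ∀ j : Fin n, x j.castSucc ≠ 0 ↔ j ∈ T :=
    fun i T hT => (Finset.mem_filter.mp hT).2
  have hTscard : ∀ i, (Ts i).card ≤ ω i :=
    fun i => card_minsupps_le G i (hω i) (Ts i) (hTsmem i)
  have hTprop : ∀ i, ∀ T ∈ Ts i, T.card + 1 = δ1 i ∧ T.Nonempty := by
    intro i T hT
    obtain ⟨x, ⟨hx1, hx2, hx3⟩, hx4⟩ := hTsmem i T hT
    refine ⟨by rw [supp_card hx2 hx4, hx3], ?_⟩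
    obtain ⟨j, hj⟩ := exists_ne_castSucc G i hx1 hx2
    exact ⟨j, (hx4 j).mp hj⟩
  have hδle : ∀ i, δ1 i ≤ δ2 i := by
    intro i
    by_cases hex : ∃ x ∈ Ciperp G i, x (Fin.last n) ≠ 0 ∧ δ1 i < hammingNorm x
    · obtain ⟨x, h1, h2, h3, h4⟩ := ((hδ2 i).1 hex).1
      omega
    · rw [(hδ2 i).2 hex]
  -- bounds on recovery set sizes
  have hRbound1 : ∀ i, ∀ R ∈ Rs i, (∃ T ∈ Ts i, T ⊆ R) → δ1 i ≤ R.card + 1 := by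
    intro i R _ ⟨T, hT, hTR⟩
    have := (hTprop i T hT).1
    have := Finset.card_le_card hTR
    omega
  have hRbound2 : ∀ i, ∀ R ∈ Rs i, (¬ ∃ T ∈ Ts i, T ⊆ R) → δ2 i ≤ R.card + 1 := by
    intro i R hR hno
    obtain ⟨c, hc1, hc2⟩ := codeword_of_recSet G i ((hRs i).2 R hR)
    set x : Fin (n+1) → F := Fin.snoc c (-1) with hxdef
    have hlast : x (Fin.last n) ≠ 0 := by
      simp [hxdef, Fin.snoc_last]
    set T : Finset (Fin n) := Finset.univ.filter (fun j => c j ≠ 0) with hTdef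
    have hTsupp : ∀ j : Fin n, x j.castSucc ≠ 0 ↔ j ∈ T := by
      intro j; simp [hxdef, Fin.snoc_castSucc, hTdef]
    have hTR : T ⊆ R := fun j hj => hc1 j (Finset.mem_filter.mp hj).2
    have hcardx : T.card + 1 = hammingNorm x := supp_card hlast hTsupp
    have hd1le : δ1 i ≤ hammingNorm x := (hδ1 i).2 x hc2 hlast
    have hne : hammingNorm x ≠ δ1 i := by
      intro heq
      exact hno ⟨T, Finset.mem_filter.mpr ⟨Finset.mem_univ _, ⟨x, ⟨hc2, hlast, heq⟩, hTsupp⟩⟩, hTR⟩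
    have hlt : δ1 i < hammingNorm x := lt_of_le_of_ne hd1le (Ne.symm hne)
    have hd2 : δ2 i ≤ hammingNorm x :=
      ((hδ2 i).1 ⟨x, hc2, hlast, hlt⟩).2 x hc2 hlast hlt
    have := Finset.card_le_card hTR
    omega
  -- nonnegativity of lam
  have hlam0 : ∀ i, 0 ≤ lam i := fun i => by
    rw [← hasum i]; exact Finset.sum_nonneg fun R _ => ha0 i R
  have hmin0 : ∀ i, 0 ≤ min (lam i) 1 := fun i => le_min (hlam0 i) zero_le_one
  -- the charged mass
  set S : Fin k → Finset (Finset (Fin n)) := fun i =>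
    (Rs i).filter (fun R => ∃ T ∈ Ts i, T ⊆ R) with hSdef
  set m : Fin k → ℝ := fun i => ∑ R ∈ S i, a i R with hmdef
  -- (C) m i ≤ ω i * min (lam i) 1
  have hC : ∀ i, m i ≤ (ω i : ℝ) * min (lam i) 1 := by
    intro i
    set g : Finset (Fin n) → Finset (Fin n) := fun R =>
      if h : ∃ T ∈ Ts i, T ⊆ R then h.choose else ∅ with hgdef
    have hgmem : ∀ R ∈ S i, g R ∈ Ts i := by
      intro R hR
      have hex := (Finset.mem_filter.mp hR).2
      simp only [hgdef, dif_pos hex]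
      exact hex.choose_spec.1
    have hgsub : ∀ R ∈ S i, g R ⊆ R := by
      intro R hR
      have hex := (Finset.mem_filter.mp hR).2
      simp only [hgdef, dif_pos hex]
      exact hex.choose_spec.2
    have hfib : ∑ T ∈ Ts i, ∑ R ∈ (S i).filter (fun R => g R = T), a i R = m i :=
      Finset.sum_fiberwise_of_maps_to hgmem _
    rw [← hfib]
    have hfb : ∀ T ∈ Ts i, ∑ R ∈ (S i).filter (fun R => g R = T), a i R ≤ min (lam i) 1 := by
      intro T hT
      refine le_min ?_ ?_
      · rw [← hasum i]
        exact Finset.sum_le_sum_of_subset_of_nonneg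
          (((Finset.filter_subset _ _).trans (Finset.filter_subset _ _)))
          (fun R hR _ => ha0 i R)
      · obtain ⟨j, hj⟩ := (hTprop i T hT).2
        have step1 : ∑ R ∈ (S i).filter (fun R => g R = T), a i R
            ≤ ∑ R ∈ Rs i, (if j ∈ R then a i R else 0) := by
          have : ∀ R ∈ (S i).filter (fun R => g R = T),
              a i R ≤ (if j ∈ R then a i R else 0) := by
            intro R hR
            have hRS := Finset.mem_filter.mp hR
            have hjR : j ∈ R := (hgsub R hRS.1) (hRS.2 ▸ hj)
            rw [if_pos hjR]
          calc ∑ R ∈ (S i).filter (fun R => g R = T), a i R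
              ≤ ∑ R ∈ (S i).filter (fun R => g R = T), (if j ∈ R then a i R else 0) :=
                Finset.sum_le_sum this
            _ ≤ ∑ R ∈ Rs i, (if j ∈ R then a i R else 0) :=
                Finset.sum_le_sum_of_subset_of_nonneg
                  ((Finset.filter_subset _ _).trans (Finset.filter_subset _ _))
                  (fun R _ _ => by split <;> simp [ha0 i R])
        have step2 : ∑ R ∈ Rs i, (if j ∈ R then a i R else 0) ≤ 1 := by
          have hcap := hacap j
          have hsingle : ∑ R ∈ Rs i, (if j ∈ R then a i R else 0)
              ≤ ∑ i', ∑ R ∈ Rs i', (if j ∈ R then a i' R else 0) :=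
            Finset.single_le_sum
              (f := fun i' => ∑ R ∈ Rs i', (if j ∈ R then a i' R else 0))
              (fun i' _ => Finset.sum_nonneg fun R _ => by split <;> simp [ha0])
              (Finset.mem_univ i)
          linarith
        exact step1.trans step2
    calc ∑ T ∈ Ts i, ∑ R ∈ (S i).filter (fun R => g R = T), a i R
        ≤ ∑ T ∈ Ts i, min (lam i) 1 := Finset.sum_le_sum hfb
      _ = (Ts i).card • min (lam i) 1 := by rw [Finset.sum_const]
      _ = ((Ts i).card : ℝ) * min (lam i) 1 := nsmul_eq_mul _ _
      _ ≤ (ω i : ℝ) * min (lam i) 1 := by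
          exact mul_le_mul_of_nonneg_right (by exact_mod_cast hTscard i) (hmin0 i)
  -- (D) per-object length bound
  have hD : ∀ i, ((δ2 i : ℝ) - 1) * lam i - ((δ2 i : ℝ) - (δ1 i : ℝ)) * m i
      ≤ ∑ R ∈ Rs i, (R.card : ℝ) * a i R := by
    intro i
    have hsplit : ∑ R ∈ S i, (R.card : ℝ) * a i R
        + ∑ R ∈ (Rs i).filter (fun R => ¬ ∃ T ∈ Ts i, T ⊆ R), (R.card : ℝ) * a i R
        = ∑ R ∈ Rs i, (R.card : ℝ) * a i R :=
      Finset.sum_filter_add_sum_filter_not (Rs i) _ _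
    have hb1 : ((δ1 i : ℝ) - 1) * m i ≤ ∑ R ∈ S i, (R.card : ℝ) * a i R := by
      rw [hmdef]
      simp only []
      rw [Finset.mul_sum]
      refine Finset.sum_le_sum fun R hR => ?_
      have hRS := Finset.mem_filter.mp hR
      have h1 := hRbound1 i R hRS.1 hRS.2
      have : (δ1 i : ℝ) - 1 ≤ (R.card : ℝ) := by
        have : (δ1 i : ℝ) ≤ (R.card : ℝ) + 1 := by exact_mod_cast h1
        linarith
      exact mul_le_mul_of_nonneg_right this (ha0 i R)
    have hmsum : ∑ R ∈ (Rs i).filter (fun R => ¬ ∃ T ∈ Ts i, T ⊆ R), a i R = lam i - m i := by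
      have := Finset.sum_filter_add_sum_filter_not (Rs i)
        (fun R => ∃ T ∈ Ts i, T ⊆ R) (a i)
      rw [hasum i] at this
      rw [hmdef]
      simp only []
      linarith [this]
    have hb2 : ((δ2 i : ℝ) - 1) * (lam i - m i)
        ≤ ∑ R ∈ (Rs i).filter (fun R => ¬ ∃ T ∈ Ts i, T ⊆ R), (R.card : ℝ) * a i R := by
      rw [← hmsum, Finset.mul_sum]
      refine Finset.sum_le_sum fun R hR => ?_
      have hRS := Finset.mem_filter.mp hR
      have h1 := hRbound2 i R hRS.1 hRS.2
      have : (δ2 i : ℝ) - 1 ≤ (R.card : ℝ) := by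
        have : (δ2 i : ℝ) ≤ (R.card : ℝ) + 1 := by exact_mod_cast h1
        linarith
      exact mul_le_mul_of_nonneg_right this (ha0 i R)
    nlinarith [hsplit, hb1, hb2]
  -- (E) total capacity bound
  have hE : ∑ i, ∑ R ∈ Rs i, (R.card : ℝ) * a i R ≤ (n : ℝ) := by
    have hcardrw : ∀ (i : Fin k) (R : Finset (Fin n)),
        (R.card : ℝ) * a i R = ∑ j : Fin n, (if j ∈ R then a i R else 0) := by
      intro i R
      rw [Finset.sum_ite_mem, Finset.univ_inter, Finset.sum_const, nsmul_eq_mul]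
    calc ∑ i, ∑ R ∈ Rs i, (R.card : ℝ) * a i R
        = ∑ i, ∑ R ∈ Rs i, ∑ j : Fin n, (if j ∈ R then a i R else 0) := by
          exact Finset.sum_congr rfl fun i _ =>
            Finset.sum_congr rfl fun R _ => hcardrw i R
      _ = ∑ j : Fin n, ∑ i, ∑ R ∈ Rs i, (if j ∈ R then a i R else 0) := by
          rw [Finset.sum_comm]
          exact Finset.sum_congr rfl fun i _ => Finset.sum_comm
      _ ≤ ∑ _j : Fin n, (1 : ℝ) := Finset.sum_le_sum fun j _ => hacap j
      _ = (n : ℝ) := by simp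
  -- final assembly
  calc ∑ i, (((δ2 i : ℝ) - 1) * (lam i - (ω i : ℝ) * min (lam i) 1) +
        ((δ1 i : ℝ) - 1) * ((ω i : ℝ) * min (lam i) 1))
      ≤ ∑ i, ∑ R ∈ Rs i, (R.card : ℝ) * a i R := by
        refine Finset.sum_le_sum fun i _ => ?_
        have hCi := hC i
        have hDi := hD i
        have hdle : (δ1 i : ℝ) ≤ (δ2 i : ℝ) := by exact_mod_cast hδle i
        have hkey : ((δ2 i : ℝ) - (δ1 i : ℝ)) * m i
            ≤ ((δ2 i : ℝ) - (δ1 i : ℝ)) * ((ω i : ℝ) * min (lam i) 1) :=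
          mul_le_mul_of_nonneg_left hCi (by linarith)
        nlinarith [hkey, hDi]
    _ ≤ (n : ℝ) := hE

/-- Second Dual Distance Bound. -/
theorem second_dual_distance_bound {F : Type} [Field F] [Fintype F] [DecidableEq F] {k n : ℕ}
    (G : Matrix (Fin k) (Fin n) F)
    (hrank : G.rank = k) (hcol : ∀ j : Fin n, ∃ i : Fin k, G i j ≠ 0)
    (δ1 δ2 ω : Fin k → ℕ)
    (hδ1 : ∀ i, (∃ x ∈ Ciperp G i, x (Fin.last n) ≠ 0 ∧ hammingNorm x = δ1 i) ∧
      ∀ x ∈ Ciperp G i, x (Fin.last n) ≠ 0 → δ1 i ≤ hammingNorm x)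
    (hδ2 : ∀ i,
      ((∃ x ∈ Ciperp G i, x (Fin.last n) ≠ 0 ∧ δ1 i < hammingNorm x) →
        ((∃ x ∈ Ciperp G i, x (Fin.last n) ≠ 0 ∧ hammingNorm x = δ2 i ∧
            δ1 i < hammingNorm x) ∧
          ∀ x ∈ Ciperp G i, x (Fin.last n) ≠ 0 → δ1 i < hammingNorm x →
            δ2 i ≤ hammingNorm x)) ∧
      ((¬ ∃ x ∈ Ciperp G i, x (Fin.last n) ≠ 0 ∧ δ1 i < hammingNorm x) → δ2 i = δ1 i))
    (hω : ∀ i, ω i * (Fintype.card F - 1) =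
      Nat.card {x : Fin (n + 1) → F //
        x ∈ Ciperp G i ∧ x (Fin.last n) ≠ 0 ∧ hammingNorm x = δ1 i})
    (Rs : Fin k → Finset (Finset (Fin n))) (hRs : recSystem G Rs)
    (lam : Fin k → ℝ) (h : inRegion Rs 1 lam) :
    ∑ i, (((δ2 i : ℝ) - 1) * (lam i - (ω i : ℝ) * min (lam i) 1) +
        ((δ1 i : ℝ) - 1) * ((ω i : ℝ) * min (lam i) 1)) ≤ n := by
  obtain ⟨a, ha0, hasum, hacap⟩ := h
  exact second_dual_distance_bound' G hrank hcol δ1 δ2 ω hδ1 hδ2 hω Rs hRs lam a ha0 hasum hacap
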